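/- Let R be a subsemiring of ℝ≥0, let N ∈ R, let k ≥ 1 be a natural number, and let E be a finite R-labelled directed graph of weight N without loops of length strictly less than k. Then ct^k_R(E) ≤ k·(N/k)^k (an inequality of real numbers). -/

import Mathlib

/-- An `R`-labelled directed graph: vertices, edges, source/target maps and a label map. -/
structure LGraph (R : Type) where
  V : Type
  E : Type
  s : E → V
  t : E → V
  l : E → R

namespace LGraph

variable {R : Type}

/-- `p = (e₁, …, e_k)` is a path of length `k`: `t eᵢ = s eᵢ₊₁` for `1 ≤ i < k`. -/
def IsPath (G : LGraph R) {k : ℕ} (p : Fin k → G.E) : Prop :=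
  ∀ (i : ℕ) (hi : i + 1 < k), G.t (p ⟨i, by omega⟩) = G.s (p ⟨i + 1, hi⟩)

/-- A loop is a (nonempty) path whose source equals its target. -/
def IsLoop (G : LGraph R) {k : ℕ} (p : Fin k → G.E) : Prop :=
  G.IsPath p ∧ ∃ hk : 0 < k, G.s (p ⟨0, hk⟩) = G.t (p ⟨k - 1, by omega⟩)

/-- No repeated edges: edges are determined by their source and target. -/
def NoRepeats (G : LGraph R) : Prop :=
  ∀ e f : G.E, G.s e = G.s f → G.t e = G.t f → e = f

/-- The weight of a labelled graph: the sum of all labels. -/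
noncomputable def wt [CommSemiring R] (G : LGraph R) : R :=
  ∑ᶠ e : G.E, G.l e

/-- The `k`-content of a labelled graph: the sum, over all paths `p` of length `k`,
of the product of the labels of the edges of `p`. -/
noncomputable def ct [CommSemiring R] (G : LGraph R) (k : ℕ) : R :=
  ∑ᶠ p : {p : Fin k → G.E // G.IsPath p}, ∏ i, G.l (p.1 i)

/-- The Chirvasitu property for `k`-paths: every two edges belong to a common
path of length `k`. -/
def Chirvasitu (G : LGraph R) (k : ℕ) : Prop :=
  ∀ e f : G.E, ∃ p : Fin k → G.E, G.IsPath p ∧ (∃ i, p i = e) ∧ (∃ i, p i = f)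

end LGraph

namespace CtAux

open Finset

variable {G : LGraph ℝ} {k : ℕ}

/-- convenient restatement of the path property -/
lemma path_step (hp : G.IsPath (k := k) p) {a b : Fin k} (h : (a : ℕ) + 1 = (b : ℕ)) :
    G.t (p a) = G.s (p b) := by
  have hb : (a : ℕ) + 1 < k := h ▸ b.isLt
  have := hp a hb
  have e1 : (⟨(a : ℕ), by omega⟩ : Fin k) = a := Fin.ext rfl
  have e2 : (⟨(a : ℕ) + 1, hb⟩ : Fin k) = b := Fin.ext h
  rwa [e1, e2] at this

/-- sources of a path are pairwise distinct -/
lemma src_ne (hnl : ∀ (m : ℕ) (q : Fin m → G.E), m < k → ¬ G.IsLoop q)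
    {p : Fin k → G.E} (hp : G.IsPath p) {i j : Fin k} (hij : (i : ℕ) < (j : ℕ)) :
    G.s (p i) ≠ G.s (p j) := by
  intro h
  have hjk : (j : ℕ) < k := j.isLt
  set m : ℕ := (j : ℕ) - (i : ℕ) with hm
  have hm0 : 0 < m := by omega
  set q : Fin m → G.E := fun a => p ⟨(i : ℕ) + (a : ℕ), by omega⟩ with hq
  refine hnl m q (by omega) ?_
  have hqpath : G.IsPath q := by
    intro a ha
    have h1 : (i : ℕ) + a + 1 < k := by omega
    have := hp ((i : ℕ) + a) h1
    simpa [hq, Nat.add_assoc] using this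
  refine ⟨hqpath, hm0, ?_⟩
  have e0 : q ⟨0, hm0⟩ = p i := by
    simp only [hq]
    exact congrArg p (Fin.ext (by simp))
  have elast : q ⟨m - 1, by omega⟩ = p ⟨(j : ℕ) - 1, by omega⟩ := by
    simp only [hq]
    exact congrArg p (Fin.ext (by simp only [Fin.val_mk]; omega))
  rw [e0, elast, h]
  exact (path_step hp (a := ⟨(j : ℕ) - 1, by omega⟩) (b := j) (by simp only [Fin.val_mk]; omega)).symm

/-- targets of a path are pairwise distinct -/
lemma tgt_ne (hnl : ∀ (m : ℕ) (q : Fin m → G.E), m < k → ¬ G.IsLoop q)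
    {p : Fin k → G.E} (hp : G.IsPath p) {i j : Fin k} (hij : (i : ℕ) < (j : ℕ)) :
    G.t (p i) ≠ G.t (p j) := by
  intro h
  have hjk : (j : ℕ) < k := j.isLt
  set m : ℕ := (j : ℕ) - (i : ℕ) with hm
  have hm0 : 0 < m := by omega
  set q : Fin m → G.E := fun a => p ⟨(i : ℕ) + 1 + (a : ℕ), by omega⟩ with hq
  refine hnl m q (by omega) ?_
  have hqpath : G.IsPath q := by
    intro a ha
    have h1 : (i : ℕ) + 1 + a + 1 < k := by omega
    have := hp ((i : ℕ) + 1 + a) h1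
    simpa [hq, Nat.add_assoc] using this
  refine ⟨hqpath, hm0, ?_⟩
  have e0 : q ⟨0, hm0⟩ = p ⟨(i : ℕ) + 1, by omega⟩ := by
    simp only [hq]
  have elast : q ⟨m - 1, by omega⟩ = p j := by
    simp only [hq]
    exact congrArg p (Fin.ext (by simp only [Fin.val_mk]; omega))
  rw [e0, elast, ← h]
  exact (path_step hp (a := i) (b := ⟨(i : ℕ) + 1, by omega⟩) (by simp only [Fin.val_mk])).symm

/-- edges of a path are pairwise distinct -/
lemma edge_ne (hnl : ∀ (m : ℕ) (q : Fin m → G.E), m < k → ¬ G.IsLoop q)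
    {p : Fin k → G.E} (hp : G.IsPath p) : Function.Injective p := by
  intro i j h
  by_contra hne
  rcases Nat.lt_or_ge (i : ℕ) (j : ℕ) with hij | hij
  · exact src_ne hnl hp hij (congrArg G.s h)
  · have : (j : ℕ) < (i : ℕ) := by
      rcases Nat.eq_or_lt_of_le hij with h' | h'
      · exact absurd (Fin.ext h'.symm) hne
      · exact h'
    exact src_ne hnl hp this (congrArg G.s h.symm)


/-- AM-GM for a `Fin n`-indexed family. -/
lemma amgm {n : ℕ} (hn : 0 < n) (y : Fin n → ℝ) (hy : ∀ i, 0 ≤ y i) :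
    ∏ i, y i ≤ ((∑ i, y i) / n) ^ n := by
  have hnR : (0:ℝ) < n := by exact_mod_cast hn
  have hw : ∑ _i : Fin n, (1 : ℝ)/n = 1 := by
    rw [Finset.sum_const, Finset.card_univ, Fintype.card_fin, nsmul_eq_mul]
    field_simp
  have h := Real.geom_mean_le_arith_mean_weighted Finset.univ (fun _ => (1:ℝ)/n) y
      (fun i _ => by positivity) hw (fun i _ => hy i)
  have hr : ∑ i : Fin n, (1:ℝ)/n * y i = (∑ i, y i)/n := by
    rw [← Finset.mul_sum]; ring
  rw [hr] at h
  have h2 := pow_le_pow_left₀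
      (Finset.prod_nonneg fun i _ => Real.rpow_nonneg (hy i) _) h n
  rw [← Finset.prod_pow] at h2
  have key : ∀ i : Fin n, (y i ^ ((1:ℝ)/n)) ^ (n : ℕ) = y i := by
    intro i
    rw [← Real.rpow_natCast (y i ^ ((1:ℝ)/n)) n, ← Real.rpow_mul (hy i)]
    rw [one_div, inv_mul_cancel₀ (ne_of_gt hnR), Real.rpow_one]
  calc ∏ i, y i = ∏ i, (y i ^ ((1:ℝ)/n)) ^ (n : ℕ) := by
        exact Finset.prod_congr rfl fun i _ => (key i).symm
    _ ≤ ((∑ i, y i)/n) ^ n := h2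

open scoped Classical in
/-- The `k`-content with an arbitrary label function. -/
noncomputable def Fsum (G : LGraph ℝ) [Fintype G.E] (k : ℕ) (x : G.E → ℝ) : ℝ :=
  ∑ p ∈ Finset.univ.filter (fun p : Fin k → G.E => G.IsPath p), ∏ i, x (p i)

/-- If `s` and `t` are injective on the support of `x`, a path with all labels
nonzero is determined by any one of its edges (and its position). -/
lemma path_det {x : G.E → ℝ}
    (hs : ∀ e f, x e ≠ 0 → x f ≠ 0 → G.s e = G.s f → e = f)
    (ht : ∀ e f, x e ≠ 0 → x f ≠ 0 → G.t e = G.t f → e = f)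
    {p q : Fin k → G.E} (hp : G.IsPath p) (hq : G.IsPath q)
    (hpx : ∀ i, x (p i) ≠ 0) (hqx : ∀ i, x (q i) ≠ 0)
    {i : Fin k} (hi : p i = q i) : p = q := by
  have up : ∀ m (h : (i:ℕ) + m < k), p ⟨(i:ℕ)+m, h⟩ = q ⟨(i:ℕ)+m, h⟩ := by
    intro m
    induction m with
    | zero =>
      intro h
      have e : (⟨(i:ℕ)+0, h⟩ : Fin k) = i := Fin.ext (by simp)
      rw [e]; exact hi
    | succ m ih =>
      intro h
      have h1 : (i:ℕ) + m < k := by omega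
      apply hs _ _ (hpx _) (hqx _)
      rw [← path_step hp (a := ⟨(i:ℕ)+m, h1⟩) (b := ⟨(i:ℕ)+(m+1), h⟩) rfl,
          ← path_step hq (a := ⟨(i:ℕ)+m, h1⟩) (b := ⟨(i:ℕ)+(m+1), h⟩) rfl,
          ih h1]
  have down : ∀ m (hm : m ≤ (i:ℕ)),
      p ⟨(i:ℕ)-m, Nat.lt_of_le_of_lt (Nat.sub_le _ _) i.isLt⟩
        = q ⟨(i:ℕ)-m, Nat.lt_of_le_of_lt (Nat.sub_le _ _) i.isLt⟩ := by
    intro m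
    induction m with
    | zero =>
      intro hm
      have e : (⟨(i:ℕ)-0, Nat.lt_of_le_of_lt (Nat.sub_le _ _) i.isLt⟩ : Fin k) = i :=
        Fin.ext (by simp)
      rw [e]; exact hi
    | succ m ih =>
      intro hm
      have hprev := ih (by omega)
      apply ht _ _ (hpx _) (hqx _)
      have hstep : ((⟨(i:ℕ)-(m+1), Nat.lt_of_le_of_lt (Nat.sub_le _ _) i.isLt⟩ : Fin k) : ℕ) + 1
          = ((⟨(i:ℕ)-m, Nat.lt_of_le_of_lt (Nat.sub_le _ _) i.isLt⟩ : Fin k) : ℕ) := by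
        simp only [Fin.val_mk]; omega
      rw [path_step hp hstep, path_step hq hstep, hprev]
  funext j
  rcases le_or_gt (i:ℕ) (j:ℕ) with hij | hij
  · have h1 : (i:ℕ) + ((j:ℕ) - (i:ℕ)) < k := by omega
    have := up ((j:ℕ) - (i:ℕ)) h1
    have e : (⟨(i:ℕ) + ((j:ℕ) - (i:ℕ)), h1⟩ : Fin k) = j := Fin.ext (by simp only [Fin.val_mk]; omega)
    rwa [e] at this
  · have := down ((i:ℕ) - (j:ℕ)) (by omega)
    have e : (⟨(i:ℕ) - ((i:ℕ) - (j:ℕ)), Nat.lt_of_le_of_lt (Nat.sub_le _ _) i.isLt⟩ : Fin k) = j :=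
      Fin.ext (by simp only [Fin.val_mk]; omega)
    rwa [e] at this

/-- Base case: `s` and `t` injective on the support of `x`. -/
lemma base (G : LGraph ℝ) [Fintype G.E] (k : ℕ) (hk : 1 ≤ k)
    (hnl : ∀ (m : ℕ) (q : Fin m → G.E), m < k → ¬ G.IsLoop q)
    (x : G.E → ℝ) (hx : ∀ e, 0 ≤ x e)
    (hs : ∀ e f, x e ≠ 0 → x f ≠ 0 → G.s e = G.s f → e = f)
    (ht : ∀ e f, x e ≠ 0 → x f ≠ 0 → G.t e = G.t f → e = f) :
    Fsum G k x ≤ k * ((∑ e, x e) / k) ^ k := by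
  classical
  set N := ∑ e, x e with hN
  have hN0 : 0 ≤ N := Finset.sum_nonneg fun e _ => hx e
  have hkR : (0:ℝ) < k := by exact_mod_cast hk
  set P := Finset.univ.filter (fun p : Fin k → G.E => G.IsPath p) with hP
  set Ps := P.filter (fun p => ∀ i, x (p i) ≠ 0) with hPs
  have hmemPs : ∀ p ∈ Ps, G.IsPath p ∧ ∀ i, x (p i) ≠ 0 := by
    intro p hp
    simp only [hPs, hP, Finset.mem_filter, Finset.mem_univ, true_and] at hp
    exact hp
  have hsplit : Fsum G k x = ∑ p ∈ Ps, ∏ i, x (p i) := by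
    show (∑ p ∈ P, ∏ i, x (p i)) = _
    rw [← Finset.sum_filter_add_sum_filter_not P (fun p => ∀ i, x (p i) ≠ 0)]
    have hz : ∑ p ∈ P.filter (fun p => ¬ ∀ i, x (p i) ≠ 0), ∏ i, x (p i) = 0 := by
      apply Finset.sum_eq_zero
      intro p hp
      simp only [Finset.mem_filter, not_forall, not_not] at hp
      obtain ⟨i, hi⟩ := hp.2
      exact Finset.prod_eq_zero (Finset.mem_univ i) hi
    rw [hz, add_zero]
  -- per path bound
  have hper : ∀ p ∈ Ps, ∏ i, x (p i) ≤ N^(k-1) * (∑ i, x (p i)) / k^k := by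
    intro p hp
    obtain ⟨hpath, hnz⟩ := hmemPs p hp
    have hinj : Function.Injective p := edge_ne hnl hpath
    have hSp0 : 0 ≤ ∑ i, x (p i) := Finset.sum_nonneg fun i _ => hx _
    have hSN : ∑ i, x (p i) ≤ N := by
      have himg : ∑ i, x (p i) = ∑ e ∈ Finset.univ.image p, x e :=
        (Finset.sum_image (fun i _ j _ h => hinj h)).symm
      rw [himg, hN]
      exact Finset.sum_le_sum_of_subset_of_nonneg (Finset.subset_univ _)
        (fun e _ _ => hx e)
    calc ∏ i, x (p i) ≤ ((∑ i, x (p i)) / k) ^ k := amgm hk (fun i => x (p i)) (fun i => hx _)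
      _ = (∑ i, x (p i))^k / k^k := by rw [div_pow]
      _ ≤ N^(k-1) * (∑ i, x (p i)) / k^k := by
          apply div_le_div_of_nonneg_right ?_ (by positivity)  -- careful: name
          calc (∑ i, x (p i))^k = (∑ i, x (p i))^(k-1) * (∑ i, x (p i)) := by
                rw [← pow_succ]; congr 1; omega
            _ ≤ N^(k-1) * (∑ i, x (p i)) :=
                mul_le_mul_of_nonneg_right (pow_le_pow_left₀ hSp0 hSN _) hSp0
  -- counting
  have hcount : ∑ p ∈ Ps, ∑ i, x (p i) ≤ k * N := by
    rw [Finset.sum_comm]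
    have hone : ∀ i : Fin k, ∑ p ∈ Ps, x (p i) ≤ N := by
      intro i
      have hinj : ∀ p ∈ Ps, ∀ q ∈ Ps, p i = q i → p = q := by
        intro p hp q hq hpq
        obtain ⟨hppath, hpnz⟩ := hmemPs p hp
        obtain ⟨hqpath, hqnz⟩ := hmemPs q hq
        exact path_det hs ht hppath hqpath hpnz hqnz hpq
      have himg : ∑ p ∈ Ps, x (p i) = ∑ e ∈ Ps.image (fun p => p i), x e :=
        (Finset.sum_image hinj).symm
      rw [himg, hN]
      exact Finset.sum_le_sum_of_subset_of_nonneg (Finset.subset_univ _)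
        (fun e _ _ => hx e)
    calc ∑ i : Fin k, ∑ p ∈ Ps, x (p i) ≤ ∑ _i : Fin k, N := Finset.sum_le_sum fun i _ => hone i
      _ = k * N := by rw [Finset.sum_const, Finset.card_univ, Fintype.card_fin, nsmul_eq_mul]
  -- combine
  have hNk : N^k = N^(k-1) * N := by rw [← pow_succ]; congr 1; omega
  calc Fsum G k x = ∑ p ∈ Ps, ∏ i, x (p i) := hsplit
    _ ≤ ∑ p ∈ Ps, N^(k-1) * (∑ i, x (p i)) / k^k := Finset.sum_le_sum hper
    _ = (N^(k-1) / k^k) * ∑ p ∈ Ps, ∑ i, x (p i) := by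
        rw [Finset.mul_sum]; exact Finset.sum_congr rfl fun p _ => by ring
    _ ≤ (N^(k-1) / k^k) * (k * N) := by
        apply mul_le_mul_of_nonneg_left hcount (by positivity)
    _ = k * (N / k) ^ k := by
        rw [div_pow, hNk]; field_simp

/-- Exchange identity: if two distinct support edges share a source or a target,
then no `k`-path contains both, and the content is a convex combination of the
contents of the two labelings obtained by transferring all weight of one edge
to the other. -/
lemma exchange (G : LGraph ℝ) [Fintype G.E] [DecidableEq G.E] (k : ℕ)
    (hnl : ∀ (m : ℕ) (q : Fin m → G.E), m < k → ¬ G.IsLoop q)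
    (x : G.E → ℝ) (hx : ∀ e, 0 ≤ x e)
    {e f : G.E} (he : x e ≠ 0) (hf : x f ≠ 0) (hef : e ≠ f)
    (hst : G.s e = G.s f ∨ G.t e = G.t f) :
    Fsum G k x
      = (x e / (x e + x f)) * Fsum G k (Function.update (Function.update x f 0) e (x e + x f))
      + (x f / (x e + x f)) * Fsum G k (Function.update (Function.update x e 0) f (x e + x f)) := by
  classical
  set x1 := Function.update (Function.update x f 0) e (x e + x f) with hx1
  set x2 := Function.update (Function.update x e 0) f (x e + x f) with hx2
  have hepos : 0 < x e := lt_of_le_of_ne (hx e) (Ne.symm he)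
  have hfpos : 0 < x f := lt_of_le_of_ne (hx f) (Ne.symm hf)
  have hspos : 0 < x e + x f := by linarith
  have hsne : x e + x f ≠ 0 := ne_of_gt hspos
  have hx1e : x1 e = x e + x f := by rw [hx1]; simp
  have hx1f : x1 f = 0 := by
    rw [hx1, Function.update_of_ne (Ne.symm hef), Function.update_self]
  have hx2f : x2 f = x e + x f := by rw [hx2]; simp
  have hx2e : x2 e = 0 := by
    rw [hx2, Function.update_of_ne hef, Function.update_self]
  have hx1other : ∀ g, g ≠ e → g ≠ f → x1 g = x g := by
    intro g hge hgf
    rw [hx1, Function.update_of_ne hge, Function.update_of_ne hgf]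
  have hx2other : ∀ g, g ≠ e → g ≠ f → x2 g = x g := by
    intro g hge hgf
    rw [hx2, Function.update_of_ne hgf, Function.update_of_ne hge]
  -- no path contains both e and f
  have hnoboth : ∀ p : Fin k → G.E, G.IsPath p → ¬ ((∃ i, p i = e) ∧ (∃ j, p j = f)) := by
    rintro p hp ⟨⟨i, hi⟩, ⟨j, hj⟩⟩
    have hij : (i:ℕ) ≠ (j:ℕ) := by
      intro hval
      have : i = j := Fin.ext hval
      exact hef (by rw [← hi, ← hj, this])
    rcases hst with hss | htt
    · rcases Nat.lt_or_ge (i:ℕ) (j:ℕ) with h' | h'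
      · exact src_ne hnl hp h' (by rw [hi, hj, hss])
      · have h'' : (j:ℕ) < (i:ℕ) := by omega
        exact src_ne hnl hp h'' (by rw [hi, hj, hss])
    · rcases Nat.lt_or_ge (i:ℕ) (j:ℕ) with h' | h'
      · exact tgt_ne hnl hp h' (by rw [hi, hj, htt])
      · have h'' : (j:ℕ) < (i:ℕ) := by omega
        exact tgt_ne hnl hp h'' (by rw [hi, hj, htt])
  -- pointwise identity
  have hpt : ∀ p : Fin k → G.E, G.IsPath p →
      ∏ i, x (p i) = (x e / (x e + x f)) * ∏ i, x1 (p i)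
        + (x f / (x e + x f)) * ∏ i, x2 (p i) := by
    intro p hp
    have hinj : Function.Injective p := edge_ne hnl hp
    by_cases hpe : ∃ i, p i = e
    · obtain ⟨i0, hi0⟩ := hpe
      have hnotf : ∀ i, p i ≠ f := fun i hif => hnoboth p hp ⟨⟨i0, hi0⟩, ⟨i, hif⟩⟩
      have hnote : ∀ i, i ≠ i0 → p i ≠ e := fun i hne' hie =>
        hne' (hinj (hie.trans hi0.symm))
      have hprodx : ∏ i, x (p i) = x (p i0) * ∏ i ∈ Finset.univ.erase i0, x (p i) :=
        (Finset.mul_prod_erase Finset.univ _ (Finset.mem_univ i0)).symm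
      have hrest1 : ∏ i ∈ Finset.univ.erase i0, x1 (p i)
          = ∏ i ∈ Finset.univ.erase i0, x (p i) :=
        Finset.prod_congr rfl fun i hi =>
          hx1other _ (hnote i (Finset.ne_of_mem_erase hi)) (hnotf i)
      have hprodx1 : ∏ i, x1 (p i) = (x e + x f) * ∏ i ∈ Finset.univ.erase i0, x (p i) := by
        rw [← Finset.mul_prod_erase Finset.univ _ (Finset.mem_univ i0), hi0, hx1e, hrest1]
      have hprodx2 : ∏ i, x2 (p i) = 0 :=
        Finset.prod_eq_zero (Finset.mem_univ i0) (by rw [hi0, hx2e])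
      rw [hprodx, hprodx1, hprodx2, hi0]
      field_simp
      ring
    · by_cases hpf : ∃ i, p i = f
      · obtain ⟨i0, hi0⟩ := hpf
        have hnote : ∀ i, p i ≠ e := fun i hie => hpe ⟨i, hie⟩
        have hnotf : ∀ i, i ≠ i0 → p i ≠ f := fun i hne' hif =>
          hne' (hinj (hif.trans hi0.symm))
        have hprodx : ∏ i, x (p i) = x (p i0) * ∏ i ∈ Finset.univ.erase i0, x (p i) :=
          (Finset.mul_prod_erase Finset.univ _ (Finset.mem_univ i0)).symm
        have hrest2 : ∏ i ∈ Finset.univ.erase i0, x2 (p i)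
            = ∏ i ∈ Finset.univ.erase i0, x (p i) :=
          Finset.prod_congr rfl fun i hi =>
            hx2other _ (hnote i) (hnotf i (Finset.ne_of_mem_erase hi))
        have hprodx2 : ∏ i, x2 (p i) = (x e + x f) * ∏ i ∈ Finset.univ.erase i0, x (p i) := by
          rw [← Finset.mul_prod_erase Finset.univ _ (Finset.mem_univ i0), hi0, hx2f, hrest2]
        have hprodx1 : ∏ i, x1 (p i) = 0 :=
          Finset.prod_eq_zero (Finset.mem_univ i0) (by rw [hi0, hx1f])
        rw [hprodx, hprodx1, hprodx2, hi0]
        field_simp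
        ring
      · have hnote : ∀ i, p i ≠ e := fun i hie => hpe ⟨i, hie⟩
        have hnotf : ∀ i, p i ≠ f := fun i hif => hpf ⟨i, hif⟩
        have h1 : ∏ i, x1 (p i) = ∏ i, x (p i) :=
          Finset.prod_congr rfl fun i _ => hx1other _ (hnote i) (hnotf i)
        have h2 : ∏ i, x2 (p i) = ∏ i, x (p i) :=
          Finset.prod_congr rfl fun i _ => hx2other _ (hnote i) (hnotf i)
        rw [h1, h2]
        field_simp
  -- summed identity
  show (∑ p ∈ Finset.univ.filter (fun p : Fin k → G.E => G.IsPath p), ∏ i, x (p i)) = _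
  rw [Finset.sum_congr rfl (fun p hp => hpt p (by
        simp only [Finset.mem_filter, Finset.mem_univ, true_and] at hp; exact hp))]
  rw [Finset.sum_add_distrib, ← Finset.mul_sum, ← Finset.mul_sum]
  rfl

/-- Main lemma: induction on the size of the support of `x`. -/
lemma key (G : LGraph ℝ) [Fintype G.E] [DecidableEq G.E] (k : ℕ) (hk : 1 ≤ k)
    (hnl : ∀ (m : ℕ) (q : Fin m → G.E), m < k → ¬ G.IsLoop q) :
    ∀ (n : ℕ) (x : G.E → ℝ), (∀ e, 0 ≤ x e) →
      (Finset.univ.filter (fun e => x e ≠ 0)).card ≤ n →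
      Fsum G k x ≤ k * ((∑ e, x e) / k) ^ k := by
  classical
  intro n
  induction n with
  | zero =>
    intro x hx hcard
    have hzero : ∀ e, x e = 0 := by
      intro e
      by_contra hne
      have : e ∈ Finset.univ.filter (fun e => x e ≠ 0) := by
        simp [hne]
      have := Finset.card_pos.mpr ⟨e, this⟩
      omega
    exact base G k hk hnl x hx
      (fun e f he _ _ => absurd (hzero e) he)
      (fun e f he _ _ => absurd (hzero e) he)
  | succ n ih =>
    intro x hx hcard
    by_cases hbad : ∃ e f, x e ≠ 0 ∧ x f ≠ 0 ∧ e ≠ f ∧ (G.s e = G.s f ∨ G.t e = G.t f)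
    · obtain ⟨e, f, he, hf, hef, hst⟩ := hbad
      set x1 := Function.update (Function.update x f 0) e (x e + x f) with hx1
      set x2 := Function.update (Function.update x e 0) f (x e + x f) with hx2
      have hepos : 0 < x e := lt_of_le_of_ne (hx e) (Ne.symm he)
      have hfpos : 0 < x f := lt_of_le_of_ne (hx f) (Ne.symm hf)
      have hx1e : x1 e = x e + x f := by rw [hx1]; simp
      have hx1f : x1 f = 0 := by
        rw [hx1, Function.update_of_ne (Ne.symm hef), Function.update_self]
      have hx2f : x2 f = x e + x f := by rw [hx2]; simp
      have hx2e : x2 e = 0 := by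
        rw [hx2, Function.update_of_ne hef, Function.update_self]
      have hx1other : ∀ g, g ≠ e → g ≠ f → x1 g = x g := by
        intro g hge hgf
        rw [hx1, Function.update_of_ne hge, Function.update_of_ne hgf]
      have hx2other : ∀ g, g ≠ e → g ≠ f → x2 g = x g := by
        intro g hge hgf
        rw [hx2, Function.update_of_ne hgf, Function.update_of_ne hge]
      have hx1nn : ∀ g, 0 ≤ x1 g := by
        intro g
        by_cases hge : g = e
        · rw [hge, hx1e]; positivity
        · by_cases hgf : g = f
          · rw [hgf, hx1f]
          · rw [hx1other g hge hgf]; exact hx g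
      have hx2nn : ∀ g, 0 ≤ x2 g := by
        intro g
        by_cases hgf : g = f
        · rw [hgf, hx2f]; positivity
        · by_cases hge : g = e
          · rw [hge, hx2e]
          · rw [hx2other g hge hgf]; exact hx g
      -- sums are preserved
      have hfmem1 : f ∈ (Finset.univ : Finset G.E) \ {e} := by
        simp [Ne.symm hef]
      have hemem2 : e ∈ (Finset.univ : Finset G.E) \ {f} := by
        simp [hef]
      have hsum1 : ∑ g, x1 g = ∑ g, x g := by
        rw [hx1]
        rw [Finset.sum_update_of_mem (Finset.mem_univ e)]
        rw [Finset.sum_update_of_mem hfmem1]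
        rw [Finset.sum_eq_add_sum_sdiff_singleton_of_mem (Finset.mem_univ e) x]
        rw [Finset.sum_eq_add_sum_sdiff_singleton_of_mem hfmem1 x]
        ring
      have hsum2 : ∑ g, x2 g = ∑ g, x g := by
        rw [hx2]
        rw [Finset.sum_update_of_mem (Finset.mem_univ f)]
        rw [Finset.sum_update_of_mem hemem2]
        rw [Finset.sum_eq_add_sum_sdiff_singleton_of_mem (Finset.mem_univ f) x]
        rw [Finset.sum_eq_add_sum_sdiff_singleton_of_mem hemem2 x]
        ring
      -- supports shrink
      have hcard1 : (Finset.univ.filter (fun g => x1 g ≠ 0)).card ≤ n := by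
        have hsub : Finset.univ.filter (fun g => x1 g ≠ 0)
            ⊆ (Finset.univ.filter (fun g => x g ≠ 0)).erase f := by
          intro g hg
          simp only [Finset.mem_filter, Finset.mem_univ, true_and] at hg
          rw [Finset.mem_erase]
          constructor
          · rintro rfl; exact hg hx1f
          · simp only [Finset.mem_filter, Finset.mem_univ, true_and]
            by_cases hge : g = e
            · rw [hge]; exact he
            · by_cases hgf : g = f
              · exact absurd (hgf ▸ hx1f) hg
              · rw [← hx1other g hge hgf]; exact hg
        have hfmem : f ∈ Finset.univ.filter (fun g => x g ≠ 0) := by simp [hf]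
        have := Finset.card_le_card hsub
        rw [Finset.card_erase_of_mem hfmem] at this
        have hpos : 1 ≤ (Finset.univ.filter (fun g => x g ≠ 0)).card :=
          Finset.card_pos.mpr ⟨f, hfmem⟩
        omega
      have hcard2 : (Finset.univ.filter (fun g => x2 g ≠ 0)).card ≤ n := by
        have hsub : Finset.univ.filter (fun g => x2 g ≠ 0)
            ⊆ (Finset.univ.filter (fun g => x g ≠ 0)).erase e := by
          intro g hg
          simp only [Finset.mem_filter, Finset.mem_univ, true_and] at hg
          rw [Finset.mem_erase]
          constructor
          · rintro rfl; exact hg hx2e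
          · simp only [Finset.mem_filter, Finset.mem_univ, true_and]
            by_cases hgf : g = f
            · rw [hgf]; exact hf
            · by_cases hge : g = e
              · exact absurd (hge ▸ hx2e) hg
              · rw [← hx2other g hge hgf]; exact hg
        have hemem : e ∈ Finset.univ.filter (fun g => x g ≠ 0) := by simp [he]
        have := Finset.card_le_card hsub
        rw [Finset.card_erase_of_mem hemem] at this
        have hpos : 1 ≤ (Finset.univ.filter (fun g => x g ≠ 0)).card :=
          Finset.card_pos.mpr ⟨e, hemem⟩
        omega
      have h1 := ih x1 hx1nn hcard1
      have h2 := ih x2 hx2nn hcard2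
      rw [hsum1] at h1
      rw [hsum2] at h2
      have hidy := exchange G k hnl x hx he hf hef hst
      rw [hidy]
      have hc1 : 0 ≤ x e / (x e + x f) := by positivity
      have hc2 : 0 ≤ x f / (x e + x f) := by positivity
      have hcsum : x e / (x e + x f) + x f / (x e + x f) = 1 := by
        field_simp
      calc x e / (x e + x f) * Fsum G k x1 + x f / (x e + x f) * Fsum G k x2
          ≤ x e / (x e + x f) * (k * ((∑ g, x g) / k) ^ k)
            + x f / (x e + x f) * (k * ((∑ g, x g) / k) ^ k) :=
            add_le_add (mul_le_mul_of_nonneg_left h1 hc1) (mul_le_mul_of_nonneg_left h2 hc2)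
        _ = k * ((∑ g, x g) / k) ^ k := by
            rw [← add_mul, hcsum, one_mul]
    · push_neg at hbad
      apply base G k hk hnl x hx
      · intro e f he hf hss
        by_contra hef
        rcases hbad e f he hf hef with ⟨h1, _⟩
        exact h1 hss
      · intro e f he hf htt
        by_contra hef
        rcases hbad e f he hf hef with ⟨_, h2⟩
        exact h2 htt

end CtAux

/-- For a subsemiring `S ⊆ ℝ≥0`, `N ∈ S`, `k ≥ 1`, and any finite
`S`-labelled directed graph `G` of weight `N` without loops of length strictly less
than `k`, one has `ct^k(G) ≤ k·(N/k)^k`. -/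
theorem ct_le_of_no_short_loops (S : Subsemiring ℝ) (hS : ∀ x ∈ S, 0 ≤ x)
    (N : ℝ) (hN : N ∈ S) (k : ℕ) (hk : 1 ≤ k)
    (G : LGraph ℝ) [Finite G.E]
    (hlab : ∀ e, G.l e ∈ S) (hne : ∀ e, G.l e ≠ 0) (hnr : G.NoRepeats)
    (hwt : G.wt = N)
    (hnl : ∀ (m : ℕ) (q : Fin m → G.E), m < k → ¬ G.IsLoop q) :
    G.ct k ≤ k * (N / k) ^ k := by
  classical
  haveI : Fintype G.E := Fintype.ofFinite G.E
  haveI : Fintype {p : Fin k → G.E // G.IsPath p} := Fintype.ofFinite _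
  have hl : ∀ e, 0 ≤ G.l e := fun e => hS _ (hlab e)
  have hwt' : ∑ e, G.l e = N := by
    rw [← hwt]
    show _ = ∑ᶠ e : G.E, G.l e
    exact (finsum_eq_sum_of_fintype _).symm
  have hct : G.ct k = CtAux.Fsum G k G.l := by
    show (∑ᶠ p : {p : Fin k → G.E // G.IsPath p}, ∏ i, G.l (p.1 i)) = _
    rw [finsum_eq_sum_of_fintype]
    exact (Finset.sum_subtype _ (by simp) (fun q : Fin k → G.E => ∏ i, G.l (q i))).symm
  rw [hct, ← hwt']
  exact CtAux.key G k hk hnl _ G.l hl le_rfl
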